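/- Let α, β, γ be the three complex roots of x³ − x − 1, with α the real root, and set a = (α+1)/((α−β)(α−γ)), b = (β+1)/((β−α)(β−γ)), c = (γ+1)/((γ−α)(γ−β)). Then for all n ≥ 1, |P_n − a·α^n| = |b·β^n + c·γ^n| < α^{−n/2}. -/

import Mathlib

/-- The Padovan sequence: `P 0 = 0`, `P 1 = 1`, `P 2 = 1`, `P (n+3) = P (n+1) + P n`. -/
def padovan : ℕ → ℕ
  | 0 => 0
  | 1 => 1
  | 2 => 1
  | n + 3 => padovan (n + 1) + padovan n

set_option maxHeartbeats 1600000 in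
/-- For `n ≥ 1`, `|P n − a·α^n| = |b·β^n + c·γ^n| < α^(−n/2)`, where `α` is the real
root of `x³ − x − 1`, `β, γ` the complex conjugate roots, and `a, b, c` the Binet
coefficients. -/
theorem padovan_error_bound
    (α : ℝ) (hα : α ^ 3 = α + 1)
    (β γ : ℂ) (hβ : β ^ 3 = β + 1) (hβim : β.im ≠ 0) (hγ : γ = starRingEnd ℂ β)
    (a b c : ℂ)
    (ha : a = ((α : ℂ) + 1) / (((α : ℂ) - β) * ((α : ℂ) - γ)))
    (hb : b = (β + 1) / ((β - (α : ℂ)) * (β - γ)))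
    (hc : c = (γ + 1) / ((γ - (α : ℂ)) * (γ - β)))
    (n : ℕ) (hn : 1 ≤ n) :
    ‖(padovan n : ℂ) - a * (α : ℂ) ^ n‖ = ‖b * β ^ n + c * γ ^ n‖ ∧
      ‖(padovan n : ℂ) - a * (α : ℂ) ^ n‖ < α ^ (-(n : ℝ) / 2) := by
  -- numeric bounds on α
  have hlo : (1.3:ℝ) < α := by
    nlinarith [sq_nonneg (α-1.3), sq_nonneg (α+1), sq_nonneg α, sq_nonneg (α-1)]
  have hhi : α < 1.4 := by
    nlinarith [sq_nonneg (α-1.4), sq_nonneg (α+1), sq_nonneg α]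
  have hα0 : (0:ℝ) < α := by linarith
  have hαC : (α:ℂ)^3 = (α:ℂ) + 1 := by
    have := congrArg (Complex.ofReal) hα; push_cast at this; exact_mod_cast this
  have hβα : β ≠ (α:ℂ) := by
    intro h; apply hβim; rw [h]; simp
  have hquad : β^2 + (α:ℂ)*β + ((α:ℂ)^2 - 1) = 0 := by
    have h3 : (β - α) * (β^2 + (α:ℂ)*β + ((α:ℂ)^2-1)) = 0 := by
      linear_combination hβ - hαC
    rcases mul_eq_zero.mp h3 with h | h
    · exact absurd (sub_eq_zero.mp h) hβα
    · exact h
  have hγβ : γ ≠ β := by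
    rw [hγ]; intro h
    apply hβim
    have := congrArg Complex.im h
    simp [Complex.conj_im] at this
    linarith
  have hquadγ : γ^2 + (α:ℂ)*γ + ((α:ℂ)^2 - 1) = 0 := by
    rw [hγ]
    have := congrArg (starRingEnd ℂ) hquad
    simpa [map_add, map_mul, map_pow, Complex.conj_ofReal] using this
  have hsum : β + γ = -(α:ℂ) := by
    have h4 : (β - γ) * (β + γ + α) = 0 := by linear_combination hquad - hquadγ
    rcases mul_eq_zero.mp h4 with h | h
    · exact absurd (sub_eq_zero.mp h) (fun hh => hγβ hh.symm)
    · linear_combination h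
  have hprod : β * γ = (α:ℂ)^2 - 1 := by linear_combination β * hsum - hquad
  have hγC : γ^3 = γ + 1 := by
    rw [hγ]
    have := congrArg (starRingEnd ℂ) hβ
    simpa [map_add, map_pow] using this
  have hγα : γ ≠ (α:ℂ) := by
    intro h
    apply hβim
    have h2 : γ.im = 0 := by rw [h]; simp
    rw [hγ] at h2; simp [Complex.conj_im] at h2; exact h2
  have d1 : (α:ℂ) - β ≠ 0 := sub_ne_zero.mpr (fun h => hβα h.symm)
  have d2 : (α:ℂ) - γ ≠ 0 := sub_ne_zero.mpr (fun h => hγα h.symm)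
  have d3 : β - γ ≠ 0 := sub_ne_zero.mpr (fun h => hγβ h.symm)
  have d1' : β - (α:ℂ) ≠ 0 := sub_ne_zero.mpr hβα
  have d2' : γ - (α:ℂ) ≠ 0 := sub_ne_zero.mpr hγα
  have d3' : γ - β ≠ 0 := sub_ne_zero.mpr hγβ
  have hγval : γ = -(α:ℂ) - β := by linear_combination hsum
  -- base cases of the Binet formula
  have B0 : a + b + c = 0 := by
    rw [hγval] at ha hb hc d2 d3 d2' d3'
    rw [ha, hb, hc]; field_simp; ring
  have B1 : a * (α:ℂ) + b * β + c * γ = 1 := by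
    rw [hγval] at ha hb hc d2 d3 d2' d3'
    rw [hγval, ha, hb, hc]; field_simp; ring
  have B2 : a * (α:ℂ)^2 + b * β^2 + c * γ^2 = 1 := by
    rw [hγval] at ha hb hc d2 d3 d2' d3'
    rw [hγval, ha, hb, hc]; field_simp; ring
  -- Binet formula by induction
  have binet3 : ∀ m : ℕ, (padovan m : ℂ) = a*(α:ℂ)^m + b*β^m + c*γ^m ∧
      (padovan (m+1) : ℂ) = a*(α:ℂ)^(m+1) + b*β^(m+1) + c*γ^(m+1) ∧
      (padovan (m+2) : ℂ) = a*(α:ℂ)^(m+2) + b*β^(m+2) + c*γ^(m+2) := by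
    intro m
    induction m with
    | zero =>
      refine ⟨?_, ?_, ?_⟩
      · simp [padovan]; linear_combination -B0
      · simp [padovan]; linear_combination -B1
      · simp [padovan]; linear_combination -B2
    | succ k ih =>
      obtain ⟨i0, i1, i2⟩ := ih
      refine ⟨i1, i2, ?_⟩
      show ((padovan (k+3) : ℕ) : ℂ) = _
      rw [padovan]
      push_cast
      rw [i0, i1]
      linear_combination (-(a*(α:ℂ)^k)) * hαC + (-(b*β^k)) * hβ + (-(c*γ^k)) * hγC
  have hdiff : (padovan n : ℂ) - a * (α:ℂ)^n = b*β^n + c*γ^n := by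
    rw [(binet3 n).1]; ring
  -- c = conj b
  have hcb : c = starRingEnd ℂ b := by
    rw [hb, hc, hγ]
    simp only [map_div₀, map_mul, map_sub, map_add, map_one, Complex.conj_ofReal,
      Complex.conj_conj]
  -- norm computations
  have hnsβ : (Complex.normSq β : ℝ) = α^2 - 1 := by
    have h1 : ((Complex.normSq β : ℝ) : ℂ) = (α:ℂ)^2 - 1 := by
      rw [← Complex.mul_conj, ← hγ]; exact hprod
    exact_mod_cast h1
  have hnsβ1 : (Complex.normSq (β+1) : ℝ) = α^2 - α := by
    have h1 : ((Complex.normSq (β+1) : ℝ) : ℂ) = (α:ℂ)^2 - (α:ℂ) := by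
      rw [← Complex.mul_conj]
      simp only [map_add, map_one, ← hγ]
      linear_combination hprod + hsum
    exact_mod_cast h1
  have hnsβα : (Complex.normSq (β-(α:ℂ)) : ℝ) = 3*α^2 - 1 := by
    have h1 : ((Complex.normSq (β-(α:ℂ)) : ℝ) : ℂ) = 3*(α:ℂ)^2 - 1 := by
      rw [← Complex.mul_conj]
      simp only [map_sub, Complex.conj_ofReal, ← hγ]
      linear_combination hprod - (α:ℂ) * hsum
    exact_mod_cast h1
  have hnsβγ : (Complex.normSq (β-γ) : ℝ) = 3*α^2 - 4 := by
    have h1 : ((Complex.normSq (β-γ) : ℝ) : ℂ) = 3*(α:ℂ)^2 - 4 := by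
      rw [← Complex.mul_conj]
      have hconj : starRingEnd ℂ (β - γ) = γ - β := by
        rw [hγ]; simp [map_sub, Complex.conj_conj]
      rw [hconj]
      linear_combination ((α:ℂ) - β - γ) * hsum + 4 * hprod
    exact_mod_cast h1
  have hinv : α⁻¹ = α^2 - 1 := by
    field_simp; nlinarith [hα]
  -- |β| = α ^ (-1/2)
  have habsβ : ‖β‖ = α ^ (-(1:ℝ)/2) := by
    rw [Complex.norm_def, hnsβ, ← hinv, Real.sqrt_inv, Real.sqrt_eq_rpow,
      show (-(1:ℝ)/2) = -(1/2 : ℝ) by norm_num, Real.rpow_neg hα0.le]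
  have habsβn : (‖β‖)^n = α ^ (-(n:ℝ)/2) := by
    rw [habsβ, ← Real.rpow_natCast (α ^ (-(1:ℝ)/2)) n, ← Real.rpow_mul hα0.le]
    congr 1
    ring
  -- 2|b| < 1
  have pos1 : (0:ℝ) < 3*α^2 - 1 := by nlinarith
  have pos2 : (0:ℝ) < 3*α^2 - 4 := by nlinarith
  have hb2 : 2 * ‖b‖ < 1 := by
    have hα4 : α^4 = α^2 + α := by linear_combination α * hα
    have key : 10*α^2 - 13*α - 4 < 0 := by
      nlinarith [mul_pos (sub_pos.mpr hlo) (sub_pos.mpr hhi)]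
    have hlt : 4*(α^2-α) < (3*α^2-1)*(3*α^2-4) := by nlinarith [key, hα4]
    have hbsq : (‖b‖)^2 = (α^2-α)/((3*α^2-1)*(3*α^2-4)) := by
      rw [Complex.sq_norm, hb, Complex.normSq_div, Complex.normSq_mul, hnsβ1, hnsβα, hnsβγ]
    have h5 : (2*‖b‖)^2 < 1 := by
      have h6 : (2*‖b‖)^2 = (4*(α^2-α))/((3*α^2-1)*(3*α^2-4)) := by
        rw [mul_pow, hbsq]; ring
      rw [h6, div_lt_one (mul_pos pos1 pos2)]; linarith
    nlinarith [norm_nonneg b, h5]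
  -- final bound
  have hβ0 : β ≠ 0 := by
    intro h; apply hβim; rw [h]; rfl
  have habsβpos : 0 < ‖β‖ := norm_pos_iff.mpr hβ0
  have hzz : c * γ^n = starRingEnd ℂ (b * β^n) := by
    rw [hcb, hγ, map_mul, map_pow]
  constructor
  · rw [hdiff]
  · rw [hdiff]
    calc ‖b*β^n + c*γ^n‖
        = |2 * (b*β^n).re| := by
          rw [hzz, Complex.add_conj, Complex.norm_real, Real.norm_eq_abs]
      _ ≤ 2 * ‖b*β^n‖ := by
          rw [abs_mul, abs_two]
          exact mul_le_mul_of_nonneg_left (Complex.abs_re_le_norm _) (by norm_num)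
      _ = (2 * ‖b‖) * (‖β‖)^n := by
          rw [norm_mul, norm_pow]; ring
      _ < 1 * (‖β‖)^n := by
          exact mul_lt_mul_of_pos_right hb2 (pow_pos habsβpos n)
      _ = α ^ (-(n:ℝ)/2) := by rw [one_mul, habsβn]
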